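/- For a connected graph G with δ(G) ≥ 1, χ_d^t(G) = 2 if and only if G is a complete bipartite graph. -/

import Mathlib

open SimpleGraph

/-- The central graph `C(G)`: subdivide each edge of `G` once (vertex `c_e` for each
edge `e`) and join all non-adjacent pairs of original vertices. -/
def centralGraph {V : Type*} (G : SimpleGraph V) : SimpleGraph (V ⊕ G.edgeSet) where
  Adj x y :=
    match x, y with
    | Sum.inl u, Sum.inl v => u ≠ v ∧ ¬ G.Adj u v
    | Sum.inl u, Sum.inr e => u ∈ (e : Sym2 V)
    | Sum.inr e, Sum.inl u => u ∈ (e : Sym2 V)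
    | Sum.inr _, Sum.inr _ => False
  symm := by
    constructor
    rintro (u | e) (v | f) h
    · exact ⟨h.1.symm, fun a => h.2 a.symm⟩
    · exact h
    · exact h
    · exact h
  loopless := by
    constructor
    rintro (u | e) h
    · exact h.1 rfl
    · exact h

/-- `f` is a total dominator coloring of `G`: a proper coloring such that every
vertex is adjacent to all vertices of some (nonempty) color class. -/
def IsTDColoring {V : Type*} (G : SimpleGraph V) (f : V → ℕ) : Prop :=
  (∀ u v, G.Adj u v → f u ≠ f v) ∧
  ∀ v, ∃ c, (∃ w, f w = c) ∧ ∀ w, f w = c → G.Adj v w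

/-- Total dominator chromatic number: minimum number of colors in a TDC. -/
noncomputable def tdcn {V : Type*} (G : SimpleGraph V) : ℕ :=
  sInf {k | ∃ f : V → ℕ, IsTDColoring G f ∧ ∀ v, f v < k}

/-- Total domination number. -/
noncomputable def tdn {V : Type*} (G : SimpleGraph V) : ℕ :=
  sInf {k | ∃ S : Set V, S.ncard = k ∧ ∀ v, ∃ u ∈ S, G.Adj v u}

/-- The join of two graphs. -/
def joinGraph {α β : Type*} (G : SimpleGraph α) (H : SimpleGraph β) :
    SimpleGraph (α ⊕ β) where
  Adj x y :=
    match x, y with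
    | Sum.inl u, Sum.inl v => G.Adj u v
    | Sum.inr u, Sum.inr v => H.Adj u v
    | Sum.inl _, Sum.inr _ => True
    | Sum.inr _, Sum.inl _ => True
  symm := by constructor; rintro (u | u) (v | v) h <;> first | exact h.symm | trivial
  loopless := by constructor; rintro (u | u) h <;> exact h.ne rfl

/-- The path graph on `n` vertices. -/
def pathG (n : ℕ) : SimpleGraph (Fin n) :=
  SimpleGraph.fromRel (fun i j => (i : ℕ) + 1 = (j : ℕ))

/-- The cycle graph on `n` vertices. -/
def cycleG (n : ℕ) : SimpleGraph (ZMod n) :=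
  SimpleGraph.fromRel (fun i j => i - j = 1)

/-- The double star `S_{1,n,n}`: center `0`, support vertices `1,...,n`
(adjacent to the center), each `i` with its own pendant `n+i`. -/
def doubleStar (n : ℕ) : SimpleGraph (Fin (2 * n + 1)) :=
  SimpleGraph.fromRel (fun a b =>
    ((a : ℕ) = 0 ∧ 1 ≤ (b : ℕ) ∧ (b : ℕ) ≤ n) ∨
    (1 ≤ (a : ℕ) ∧ (a : ℕ) ≤ n ∧ (b : ℕ) = (a : ℕ) + n))

/-- The disjoint union of a family of graphs. -/
def sigmaGraph {ι : Type*} {V : ι → Type*} (G : ∀ i, SimpleGraph (V i)) :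
    SimpleGraph (Σ i, V i) :=
  SimpleGraph.fromRel (fun x y =>
    ∃ (i : ι) (u v : V i), (G i).Adj u v ∧ x = ⟨i, u⟩ ∧ y = ⟨i, v⟩)
theorem tdcn_eq_two_iff {V : Type*} [Fintype V] (G : SimpleGraph V)
    (hconn : G.Connected) (hδ : ∀ v, ∃ u, G.Adj v u) :
    tdcn G = 2 ↔
      ∃ s : Set V, s.Nonempty ∧ sᶜ.Nonempty ∧
        ∀ u v, G.Adj u v ↔ (u ∈ s ↔ v ∉ s) := by
  classical
  obtain ⟨v₀⟩ := hconn.nonempty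
  set S := {k | ∃ f : V → ℕ, IsTDColoring G f ∧ ∀ v, f v < k} with hSdef
  have hSbig : ∀ k ∈ S, 2 ≤ k := by
    rintro k ⟨g, ⟨gprop, _⟩, glt⟩
    obtain ⟨u, hu⟩ := hδ v₀
    have h1 := gprop v₀ u hu
    have := glt v₀; have := glt u; omega
  constructor
  · intro h
    have hS : S.Nonempty := by
      by_contra hne
      rw [Set.not_nonempty_iff_eq_empty] at hne
      rw [tdcn, ← hSdef, hne, Nat.sInf_empty] at h
      omega
    have h2 : 2 ∈ S := by
      have := Nat.sInf_mem hS
      rwa [show sInf S = 2 from h] at this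
    obtain ⟨f, ⟨hprop, hdom⟩, hlt⟩ := h2
    have hdom' : ∀ v, ∃ c, c < 2 ∧ c ≠ f v ∧ (∃ w, f w = c) ∧
        ∀ w, f w = c → G.Adj v w := by
      intro v
      obtain ⟨c, ⟨w, hw⟩, hall⟩ := hdom v
      refine ⟨c, hw ▸ hlt w, ?_, ⟨w, hw⟩, hall⟩
      intro hc
      exact G.loopless.irrefl v (hall v hc.symm)
    refine ⟨{v | f v = 0}, ?_, ?_, ?_⟩
    · obtain ⟨c, hc2, hcne, ⟨w, hw⟩, _⟩ := hdom' v₀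
      by_cases h0 : f v₀ = 0
      · exact ⟨v₀, h0⟩
      · have : c = 0 := by have := hlt v₀; omega
        exact ⟨w, by simpa [this] using hw⟩
    · obtain ⟨c, hc2, hcne, ⟨w, hw⟩, _⟩ := hdom' v₀
      by_cases h0 : f v₀ = 0
      · have : c = 1 := by omega
        exact ⟨w, by simp [Set.mem_compl_iff, hw, this]⟩
      · exact ⟨v₀, by simpa using h0⟩
    · intro u v
      constructor
      · intro hadj
        have := hprop u v hadj
        have := hlt u; have := hlt v
        simp only [Set.mem_setOf_eq]; omega
      · intro hiff
        simp only [Set.mem_setOf_eq] at hiff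
        have hne : f u ≠ f v := by have := hlt u; have := hlt v; omega
        obtain ⟨c, hc2, hcne, _, hall⟩ := hdom' v
        have hcu : f u = c := by have := hlt u; have := hlt v; omega
        exact (hall u hcu).symm
  · rintro ⟨s, ⟨a, ha⟩, ⟨b, hb⟩, hG⟩
    have hb' : b ∉ s := hb
    set f : V → ℕ := fun v => if v ∈ s then 0 else 1 with hf
    have hmem : 2 ∈ S := by
      refine ⟨f, ⟨?_, ?_⟩, ?_⟩
      · intro u v hadj
        have := (hG u v).mp hadj
        by_cases hu : u ∈ s <;> by_cases hv : v ∈ s <;> simp [hf, hu, hv] <;> tauto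
      · intro v
        by_cases hv : v ∈ s
        · refine ⟨1, ⟨b, by simp [hf, hb']⟩, ?_⟩
          intro w hw
          have hws : w ∉ s := by by_contra hws; simp [hf, hws] at hw
          exact (hG v w).mpr (by tauto)
        · refine ⟨0, ⟨a, by simp [hf, ha]⟩, ?_⟩
          intro w hw
          have hws : w ∈ s := by by_contra hws; simp [hf, hws] at hw
          exact (hG v w).mpr (by tauto)
      · intro v; by_cases hv : v ∈ s <;> simp [hf, hv]
    have hle : sInf S ≤ 2 := Nat.sInf_le hmem
    have hge : 2 ≤ sInf S := hSbig _ (Nat.sInf_mem ⟨2, hmem⟩)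
    rw [tdcn, ← hSdef]; omega
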